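/- Suppose N ≥ 2. For every reset distribution q there exist j ∈ {0,…,m−1} and p_0 ∈ [0,1] such that the fixed-point attempt probabilities coincide: τ(j; p_0) = τ̂(q). That is, the family of RandomReset policies achieves every attempt probability achievable by an arbitrary reset distribution. -/
import Mathlib


open Finset

/-- `α_j(c) = (1-c) ∑_{i=j}^m 2^i c^{i-j} + 2^m c^{m-j}`. -/
noncomputable def alphaB (m j : ℕ) (c : ℝ) : ℝ :=
  (1 - c) * ∑ i ∈ Finset.Icc j m, (2 : ℝ) ^ i * c ^ (i - j) + (2 : ℝ) ^ m * c ^ (m - j)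

/-- `κ_0 = 2 / CW_min`. -/
noncomputable def kappa0 (CWmin : ℕ) : ℝ := 2 / (CWmin : ℝ)

/-- A reset distribution `q = (q_0, …, q_m)`. -/
def IsResetDist (m : ℕ) (q : Fin (m + 1) → ℝ) : Prop :=
  (∀ j, 0 ≤ q j) ∧ (∑ j, q j) = 1

/-- Conditional attempt probability `τ̂_c(q) = κ_0 / ∑_j q_j α_j(c)`. -/
noncomputable def tauHatC (m CWmin : ℕ) (q : Fin (m + 1) → ℝ) (c : ℝ) : ℝ :=
  kappa0 CWmin / ∑ j : Fin (m + 1), q j * alphaB m (j : ℕ) c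

/-- RandomReset(j; p₀) conditional attempt probability
`τ_c(j;p₀) = κ_0 / (p₀ α_j(c) + ((1-p₀)/(m-j)) ∑_{i=j+1}^m α_i(c))`. -/
noncomputable def tauRRC (m CWmin : ℕ) (j : ℕ) (p0 c : ℝ) : ℝ :=
  kappa0 CWmin /
    (p0 * alphaB m j c + ((1 - p0) / ((m : ℝ) - (j : ℝ))) * ∑ i ∈ Finset.Icc (j + 1) m, alphaB m i c)

/-- `τ ∈ [0,1]` is the fixed-point attempt probability `τ̂(q)` of the reset distribution `q`
for `N` nodes: `τ = τ̂_{1-(1-τ)^(N-1)}(q)`. -/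
def IsFixedPointQ (m CWmin N : ℕ) (q : Fin (m + 1) → ℝ) (τ : ℝ) : Prop :=
  τ ∈ Set.Icc (0 : ℝ) 1 ∧ τ = tauHatC m CWmin q (1 - (1 - τ) ^ (N - 1))

/-- `τ ∈ [0,1]` is the fixed-point attempt probability `τ(j;p₀)` of the RandomReset(j;p₀)
policy for `N` nodes: `τ = τ_{1-(1-τ)^(N-1)}(j;p₀)`. -/
def IsFixedPointRR (m CWmin N : ℕ) (j : ℕ) (p0 τ : ℝ) : Prop :=
  τ ∈ Set.Icc (0 : ℝ) 1 ∧ τ = tauRRC m CWmin j p0 (1 - (1 - τ) ^ (N - 1))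

lemma alphaB_rec (m j : ℕ) (c : ℝ) (hj : j < m) :
    alphaB m j c = (1 - c) * 2 ^ j + c * alphaB m (j + 1) c := by
  unfold alphaB
  have h1 : Finset.Icc j m = insert j (Finset.Icc (j + 1) m) := by
    ext i; simp only [Finset.mem_Icc, Finset.mem_insert]; omega
  rw [h1, Finset.sum_insert (by simp)]
  have h2 : ∀ i ∈ Finset.Icc (j + 1) m,
      (2 : ℝ) ^ i * c ^ (i - j) = c * ((2 : ℝ) ^ i * c ^ (i - (j + 1))) := by
    intro i hi
    have hij : j + 1 ≤ i := (Finset.mem_Icc.mp hi).1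
    have h : i - j = (i - (j + 1)) + 1 := by omega
    rw [h, pow_succ]; ring
  rw [Finset.sum_congr rfl h2, ← Finset.mul_sum]
  have h3 : m - j = (m - (j + 1)) + 1 := by omega
  rw [h3, pow_succ, Nat.sub_self, pow_zero]
  ring

lemma alphaB_self (m : ℕ) (c : ℝ) : alphaB m m c = (1 - c) * 2 ^ m + 2 ^ m := by
  unfold alphaB
  rw [Finset.Icc_self, Finset.sum_singleton, Nat.sub_self, pow_zero]
  ring

lemma alphaB_ge (m : ℕ) (c : ℝ) (hc0 : 0 ≤ c) (hc1 : c ≤ 1) :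
    ∀ k, k ≤ m → (2 : ℝ) ^ k ≤ alphaB m k c := by
  have key : ∀ d k, k + d = m → (2 : ℝ) ^ k ≤ alphaB m k c := by
    intro d
    induction d with
    | zero =>
      intro k hk
      have : k = m := by omega
      subst this
      rw [alphaB_self]
      have h2 : (0 : ℝ) ≤ 2 ^ k := by positivity
      nlinarith
    | succ d ih =>
      intro k hk
      have hj : k < m := by omega
      rw [alphaB_rec m k c hj]
      have h1 := ih (k + 1) (by omega)
      have h2 : (0 : ℝ) ≤ 2 ^ k := by positivity
      have h3 : (2 : ℝ) ^ (k + 1) = 2 * 2 ^ k := by rw [pow_succ]; ring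
      nlinarith
  intro k hk
  exact key (m - k) k (by omega)

lemma alphaB_le_succ (m j : ℕ) (c : ℝ) (hc0 : 0 ≤ c) (hc1 : c ≤ 1) (hj : j < m) :
    alphaB m j c ≤ alphaB m (j + 1) c := by
  rw [alphaB_rec m j c hj]
  have h1 : (2 : ℝ) ^ (j + 1) ≤ alphaB m (j + 1) c := alphaB_ge m c hc0 hc1 (j + 1) hj
  have h2 : (0 : ℝ) ≤ 2 ^ j := by positivity
  have h3 : (2 : ℝ) ^ (j + 1) = 2 * 2 ^ j := by rw [pow_succ]; ring
  nlinarith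

lemma alphaB_mono (m : ℕ) (c : ℝ) (hc0 : 0 ≤ c) (hc1 : c ≤ 1) :
    ∀ j k, j ≤ k → k ≤ m → alphaB m j c ≤ alphaB m k c := by
  intro j k hjk hkm
  induction k, hjk using Nat.le_induction with
  | base => exact le_rfl
  | succ k hk ih =>
    exact le_trans (ih (by omega)) (alphaB_le_succ m k c hc0 hc1 (by omega))

/-- For `N ≥ 2` and every reset distribution `q`, there exist `j ∈ {0,…,m-1}` and
`p₀ ∈ [0,1]` such that the fixed-point attempt probabilities coincide: `τ(j;p₀) = τ̂(q)`.
The RandomReset family achieves every attempt probability achievable by an arbitrary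
reset distribution. -/
theorem RR_achieves_every_fixedPoint (m CWmin N : ℕ) (hm : 1 ≤ m) (hCW : 2 ≤ CWmin)
    (hN : 2 ≤ N) (q : Fin (m + 1) → ℝ) (hq : IsResetDist m q)
    (τq : ℝ) (hτq : IsFixedPointQ m CWmin N q τq) :
    ∃ j : ℕ, ∃ p0 : ℝ, j < m ∧ p0 ∈ Set.Icc (0 : ℝ) 1 ∧
      IsFixedPointRR m CWmin N j p0 τq := by
  obtain ⟨hq0, hq1⟩ := hq
  obtain ⟨hτ01, hτeq⟩ := hτq
  set c := 1 - (1 - τq) ^ (N - 1) with hc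
  have hτ0 := hτ01.1
  have hτ1 := hτ01.2
  have hc0 : 0 ≤ c := by
    have h1 : (1 - τq) ^ (N - 1) ≤ 1 := pow_le_one₀ (by linarith) (by linarith)
    simp only [hc]; linarith
  have hc1 : c ≤ 1 := by
    have h1 : 0 ≤ (1 - τq) ^ (N - 1) := pow_nonneg (by linarith) _
    simp only [hc]; linarith
  have hmono := alphaB_mono m c hc0 hc1
  set D := ∑ j : Fin (m + 1), q j * alphaB m (j : ℕ) c with hD
  have hD_lb : alphaB m 0 c ≤ D := by
    calc alphaB m 0 c = ∑ j : Fin (m + 1), q j * alphaB m 0 c := by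
          rw [← Finset.sum_mul, hq1, one_mul]
      _ ≤ D := Finset.sum_le_sum fun j _ =>
          mul_le_mul_of_nonneg_left (hmono 0 (j : ℕ) (Nat.zero_le _) (Fin.is_le j)) (hq0 j)
  have hD_ub : D ≤ alphaB m m c := by
    calc D ≤ ∑ j : Fin (m + 1), q j * alphaB m m c := Finset.sum_le_sum fun j _ =>
          mul_le_mul_of_nonneg_left (hmono (j : ℕ) m (Fin.is_le j) le_rfl) (hq0 j)
      _ = alphaB m m c := by rw [← Finset.sum_mul, hq1, one_mul]
  set S := (Finset.range m).filter (fun i => alphaB m i c ≤ D) with hS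
  have h0S : 0 ∈ S := Finset.mem_filter.mpr ⟨Finset.mem_range.mpr hm, hD_lb⟩
  have hne : S.Nonempty := ⟨0, h0S⟩
  set j := S.max' hne with hj
  have hjS := S.max'_mem hne
  have hjm : j < m := Finset.mem_range.mp (Finset.mem_filter.mp hjS).1
  have hαjD : alphaB m j c ≤ D := (Finset.mem_filter.mp hjS).2
  set Ssum := ∑ i ∈ Finset.Icc (j + 1) m, alphaB m i c with hSsum
  have hmj : (0 : ℝ) < (m : ℝ) - (j : ℝ) := by
    have : (j : ℝ) < (m : ℝ) := by exact_mod_cast hjm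
    linarith
  set A := Ssum / ((m : ℝ) - (j : ℝ)) with hA
  have hA_ge : alphaB m (j + 1) c ≤ A := by
    have hcard : (Finset.Icc (j + 1) m).card = m - j := by rw [Nat.card_Icc]; omega
    have hle : ∀ i ∈ Finset.Icc (j + 1) m, alphaB m (j + 1) c ≤ alphaB m i c := by
      intro i hi
      exact hmono (j + 1) i (Finset.mem_Icc.mp hi).1 (Finset.mem_Icc.mp hi).2
    have hsum : ((m - j : ℕ) : ℝ) * alphaB m (j + 1) c ≤ Ssum := by
      calc ((m - j : ℕ) : ℝ) * alphaB m (j + 1) c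
          = ∑ _i ∈ Finset.Icc (j + 1) m, alphaB m (j + 1) c := by
            rw [Finset.sum_const, hcard, nsmul_eq_mul]
        _ ≤ Ssum := Finset.sum_le_sum hle
    rw [hA, le_div_iff₀ hmj]
    have hcast : ((m - j : ℕ) : ℝ) = (m : ℝ) - (j : ℝ) := by
      rw [Nat.cast_sub hjm.le]
    linarith [hsum, hcast ▸ hsum]
  have hDA : D ≤ A := by
    by_cases hj1 : j + 1 < m
    · have hnot : ¬ (alphaB m (j + 1) c ≤ D) := by
        intro h
        have := S.le_max' (j + 1) (Finset.mem_filter.mpr ⟨Finset.mem_range.mpr hj1, h⟩)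
        omega
      push_neg at hnot
      linarith
    · have hjm1 : j + 1 = m := by omega
      have : alphaB m m c ≤ A := hjm1 ▸ hA_ge
      linarith
  have hαjA : alphaB m j c ≤ A := le_trans hαjD hDA
  set p0 := (A - D) / (A - alphaB m j c) with hp0
  have hp0_mem : p0 ∈ Set.Icc (0 : ℝ) 1 := by
    constructor
    · exact div_nonneg (by linarith) (by linarith)
    · exact div_le_one_of_le₀ (by linarith) (by linarith)
  have hden : p0 * alphaB m j c + (1 - p0) * A = D := by
    by_cases h : A = alphaB m j c
    · have hDα : D = alphaB m j c := le_antisymm (h ▸ hDA) hαjD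
      rw [h, hDα]; ring
    · have hne' : A - alphaB m j c ≠ 0 := sub_ne_zero.mpr h
      rw [hp0]
      field_simp
      ring
  refine ⟨j, p0, hjm, hp0_mem, hτ01, ?_⟩
  have hden2 : p0 * alphaB m j c + ((1 - p0) / ((m : ℝ) - (j : ℝ))) * Ssum = D := by
    rw [← hden, hA]; ring
  show τq = tauRRC m CWmin j p0 c
  rw [hτeq]
  unfold tauRRC tauHatC
  rw [← hSsum, hden2, ← hD]
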